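/- For every positive integer k there exists a k-tree that is not odd (k+1)-colorable. Concretely, the k-tree G with vertex set {v₁,…,v_k} ∪ {u₀,u₁,…,u_k}, where {v₁,…,v_k,u₀} is a clique and for each j∈[k], N(u_j) = ({v_i : i∈[k], i≠j}) ∪ {u₀}, admits no odd (k+1)-coloring. -/

import Mathlib

open SimpleGraph Finset
open scoped Classical

section Defs

variable {V : Type*}

/-- Degree of a vertex (classical, no decidability assumptions). -/
noncomputable def gdeg [Fintype V] (G : SimpleGraph V) (v : V) : ℕ :=
  (Finset.univ.filter fun u => G.Adj v u).card

/-- Number of neighbors of `v` receiving color `c` under `φ`. -/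
noncomputable def colorCount [Fintype V] (G : SimpleGraph V) {α : Type*} (φ : V → α)
    (v : V) (c : α) : ℕ :=
  (Finset.univ.filter fun u => G.Adj v u ∧ φ u = c).card

/-- `φ` is a proper coloring of `G`. -/
def ProperColoring (G : SimpleGraph V) {α : Type*} (φ : V → α) : Prop :=
  ∀ u w, G.Adj u w → φ u ≠ φ w

/-- Vertex `v` satisfies the odd condition w.r.t. `φ`. -/
def OddAt [Fintype V] (G : SimpleGraph V) {α : Type*} (φ : V → α) (v : V) : Prop :=
  ∃ c, Odd (colorCount G φ v c)

/-- `φ` is an odd `m`-coloring of `G`. -/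
def IsOddColoring [Fintype V] (G : SimpleGraph V) (m : ℕ) (φ : V → Fin m) : Prop :=
  ProperColoring G φ ∧ ∀ v : V, (∃ u, G.Adj v u) → OddAt G φ v

/-- `G` is odd `m`-colorable. -/
def OddColorable [Fintype V] (G : SimpleGraph V) (m : ℕ) : Prop :=
  ∃ φ : V → Fin m, IsOddColoring G m φ

/-- The identity ordering of `Fin n` is an addition ordering of `G` as a `k`-tree:
the first `k+1` vertices form a clique and every later vertex's earlier neighborhood
is a clique of order `k`. -/
def IsAdditionOrdering {n : ℕ} (k : ℕ) (G : SimpleGraph (Fin n)) : Prop :=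
  (∀ i j : Fin n, i.val < k + 1 → j.val < k + 1 → i ≠ j → G.Adj i j) ∧
  ∀ i : Fin n, k + 1 ≤ i.val →
    G.IsNClique k (Finset.univ.filter fun j => j < i ∧ G.Adj i j)

/-- `G` is a `k`-tree. -/
def IsKTree (k : ℕ) [Fintype V] (G : SimpleGraph V) : Prop :=
  k + 1 ≤ Fintype.card V ∧
  ∃ e : V ≃ Fin (Fintype.card V),
    IsAdditionOrdering k (SimpleGraph.comap (fun j => e.symm j) G)

/-- The graph obtained from `G` by deleting the vertices in `S`
(the vertices of `S` are kept but become isolated). -/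
def GraphDel (G : SimpleGraph V) (S : Set V) : SimpleGraph V where
  Adj x y := G.Adj x y ∧ x ∉ S ∧ y ∉ S
  symm := ⟨fun x y h => ⟨h.1.symm, h.2.2, h.2.1⟩⟩
  loopless := ⟨fun x h => G.irrefl h.1⟩

end Defs

/-- The relation generating the `k`-tree that is not odd `(k+1)`-colorable:
vertices are `v₁,…,v_k` (`Sum.inl`) and `u₀,u₁,…,u_k` (`Sum.inr`, index `0` is `u₀`,
index `j ≥ 1` is `u_j`). -/
def badRel (k : ℕ) : Fin k ⊕ Fin (k + 1) → Fin k ⊕ Fin (k + 1) → Prop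
  | Sum.inl _, Sum.inl _ => True
  | Sum.inl i, Sum.inr j => j.val = 0 ∨ i.val + 1 ≠ j.val
  | Sum.inr _, Sum.inl _ => False
  | Sum.inr j, Sum.inr _ => j.val = 0

/-- The `k`-tree with vertices `{v₁,…,v_k} ∪ {u₀,…,u_k}` where `{v₁,…,v_k,u₀}` is a
clique and `N(u_j) = {v_i : i ≠ j} ∪ {u₀}` for `j ∈ [k]`. -/
def badKTree (k : ℕ) : SimpleGraph (Fin k ⊕ Fin (k + 1)) :=
  SimpleGraph.fromRel (badRel k)


section Aux

open Sum SimpleGraph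

variable {k : ℕ}

lemma bad_adj_inl_inl {i i' : Fin k} (h : i ≠ i') :
    (badKTree k).Adj (Sum.inl i) (Sum.inl i') := by
  rw [badKTree, SimpleGraph.fromRel_adj]
  exact ⟨by simpa using h, Or.inl trivial⟩

lemma bad_adj_inl_inr {i : Fin k} {j : Fin (k+1)} :
    (badKTree k).Adj (Sum.inl i) (Sum.inr j) ↔ (j.val = 0 ∨ i.val + 1 ≠ j.val) := by
  simp [badKTree, SimpleGraph.fromRel_adj, badRel]

lemma bad_adj_inr_inl {i : Fin k} {j : Fin (k+1)} :
    (badKTree k).Adj (Sum.inr j) (Sum.inl i) ↔ (j.val = 0 ∨ i.val + 1 ≠ j.val) := by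
  rw [SimpleGraph.adj_comm]; exact bad_adj_inl_inr

lemma bad_adj_inr_inr {j j' : Fin (k+1)} :
    (badKTree k).Adj (Sum.inr j) (Sum.inr j') ↔ j ≠ j' ∧ (j.val = 0 ∨ j'.val = 0) := by
  simp [badKTree, SimpleGraph.fromRel_adj, badRel]

lemma card_bad (k : ℕ) : k + (k + 1) = Fintype.card (Fin k ⊕ Fin (k+1)) := by simp

/-- The ordering equivalence: `v`'s first, then `u₀,…,u_k`. -/
def badEquiv (k : ℕ) : (Fin k ⊕ Fin (k+1)) ≃ Fin (Fintype.card (Fin k ⊕ Fin (k+1))) :=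
  finSumFinEquiv.trans (finCongr (card_bad k))

lemma badEquiv_inl (i : Fin k) : ((badEquiv k) (Sum.inl i)).val = i.val := by
  simp [badEquiv]

lemma badEquiv_inr (j : Fin (k+1)) : ((badEquiv k) (Sum.inr j)).val = k + j.val := by
  simp [badEquiv]

lemma badEquiv_symm_lt {m : Fin (Fintype.card (Fin k ⊕ Fin (k+1)))} (hm : m.val < k) :
    (badEquiv k).symm m = Sum.inl ⟨m.val, hm⟩ := by
  rw [Equiv.symm_apply_eq]
  apply Fin.ext
  rw [badEquiv_inl]

lemma badEquiv_symm_ge {m : Fin (Fintype.card (Fin k ⊕ Fin (k+1)))} (hm : k ≤ m.val)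
    (h2 : m.val - k < k + 1) :
    (badEquiv k).symm m = Sum.inr ⟨m.val - k, h2⟩ := by
  rw [Equiv.symm_apply_eq]
  apply Fin.ext
  rw [badEquiv_inr]
  show m.val = k + (m.val - k)
  omega

lemma bad_isKTree (k : ℕ) (hk : 1 ≤ k) : IsKTree k (badKTree k) := by
  have hcard : Fintype.card (Fin k ⊕ Fin (k+1)) = k + (k+1) := by simp
  constructor
  · omega
  refine ⟨badEquiv k, ?_, ?_⟩
  · intro i j hi hj hij
    have hvij : i.val ≠ j.val := fun h => hij (Fin.ext h)
    simp only [SimpleGraph.comap_adj]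
    by_cases h1 : i.val < k <;> by_cases h2 : j.val < k
    · rw [badEquiv_symm_lt h1, badEquiv_symm_lt h2]
      exact bad_adj_inl_inl (fun heq => hvij (by simpa using congrArg Fin.val heq))
    · rw [badEquiv_symm_lt h1, badEquiv_symm_ge (by omega) (by omega)]
      exact bad_adj_inl_inr.mpr (Or.inl (show j.val - k = 0 by omega))
    · rw [badEquiv_symm_ge (by omega) (by omega), badEquiv_symm_lt h2]
      exact bad_adj_inr_inl.mpr (Or.inl (show i.val - k = 0 by omega))
    · omega
  · intro i hi
    have hilt : i.val < k + (k+1) := by have h := i.isLt; omega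
    have hj1 : 1 ≤ i.val - k := by omega
    have hj2 : i.val - k ≤ k := by omega
    have hesymm : (badEquiv k).symm i = Sum.inr ⟨i.val - k, by omega⟩ :=
      badEquiv_symm_ge (by omega) (by omega)
    have hmem : ∀ m : Fin (Fintype.card (Fin k ⊕ Fin (k+1))),
        (m < i ∧ (badKTree k).Adj ((badEquiv k).symm i) ((badEquiv k).symm m))
        ↔ (m.val ≤ k ∧ m.val + 1 ≠ i.val - k) := by
      intro m
      have hm2 : m.val < k + (k+1) := by have h := m.isLt; omega
      rw [hesymm, Fin.lt_def]
      by_cases h1 : m.val < k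
      · rw [badEquiv_symm_lt h1, bad_adj_inr_inl]
        show (m.val < i.val ∧ (i.val - k = 0 ∨ m.val + 1 ≠ i.val - k)) ↔ _
        omega
      · rw [badEquiv_symm_ge (by omega) (by omega), bad_adj_inr_inr]
        show m.val < i.val ∧ ((⟨i.val - k, by omega⟩ : Fin (k+1)) ≠ ⟨m.val - k, by omega⟩
          ∧ (i.val - k = 0 ∨ m.val - k = 0)) ↔ m.val ≤ k ∧ m.val + 1 ≠ i.val - k
        simp only [Ne, Fin.mk.injEq]
        omega
    have hset : (Finset.univ.filter fun m => m < i ∧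
          (SimpleGraph.comap (fun j => (badEquiv k).symm j) (badKTree k)).Adj i m)
        = Finset.attachFin ((Finset.range (k+1)).erase (i.val - k - 1))
            (fun m hm => by simp only [Finset.mem_erase, Finset.mem_range] at hm; omega) := by
      ext m
      simp only [Finset.mem_filter, Finset.mem_univ, true_and, Finset.mem_attachFin,
        Finset.mem_erase, Finset.mem_range, SimpleGraph.comap_adj]
      rw [hmem m]
      omega
    rw [SimpleGraph.isNClique_iff]
    constructor
    · intro a ha b hb hne
      simp only [Finset.coe_filter, Set.mem_setOf_eq, Finset.mem_univ, true_and,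
        SimpleGraph.comap_adj] at ha hb
      have ha' := (hmem a).mp ⟨ha.1, ha.2⟩
      have hb' := (hmem b).mp ⟨hb.1, hb.2⟩
      have hvab : a.val ≠ b.val := fun h => hne (Fin.ext h)
      clear ha hb hne
      simp only [SimpleGraph.comap_adj]
      obtain ⟨ha1, ha2⟩ := ha'
      obtain ⟨hb1, hb2⟩ := hb'
      by_cases h1 : a.val < k <;> by_cases h2 : b.val < k
      · rw [badEquiv_symm_lt h1, badEquiv_symm_lt h2]
        exact bad_adj_inl_inl (fun heq => hvab (by simpa using congrArg Fin.val heq))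
      · rw [badEquiv_symm_lt h1, badEquiv_symm_ge (by omega) (by omega)]
        exact bad_adj_inl_inr.mpr (Or.inl (show b.val - k = 0 by omega))
      · rw [badEquiv_symm_ge (by omega) (by omega), badEquiv_symm_lt h2]
        exact bad_adj_inr_inl.mpr (Or.inl (show a.val - k = 0 by omega))
      · omega
    · have hc := congrArg Finset.card hset
      rw [Finset.card_attachFin, Finset.card_erase_of_mem (by
        simp only [Finset.mem_range]; omega), Finset.card_range] at hc
      convert hc.trans (by omega : k + 1 - 1 = k) using 2
      ext m; simp only [Finset.mem_filter]

lemma card_filter_indep {α : Type*} [Fintype α] (p : α → Prop) (h1 h2 : DecidablePred p) :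
    (@Finset.filter α p h1 Finset.univ).card = (@Finset.filter α p h2 Finset.univ).card := by
  have e : h1 = h2 := Subsingleton.elim h1 h2
  rw [e]

lemma filter_sum_card {α β : Type*} [Fintype α] [Fintype β] (p : α ⊕ β → Prop) :
    ∃ (A : Finset α) (B : Finset β),
      (∀ a, a ∈ A ↔ p (Sum.inl a)) ∧ (∀ b, b ∈ B ↔ p (Sum.inr b)) ∧
      (Finset.univ.filter p).card = A.card + B.card := by
  classical
  refine ⟨Finset.univ.filter (fun a => p (Sum.inl a)),
    Finset.univ.filter (fun b => p (Sum.inr b)), fun a => by simp, fun b => by simp, ?_⟩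
  have hu : (Finset.univ.filter p)
      = ((Finset.univ.filter fun a => p (Sum.inl a)).map ⟨Sum.inl, Sum.inl_injective⟩)
        ∪ ((Finset.univ.filter fun b => p (Sum.inr b)).map ⟨Sum.inr, Sum.inr_injective⟩) := by
    ext x
    cases x <;> simp
  rw [hu, Finset.card_union_of_disjoint (by simp [Finset.disjoint_left]),
    Finset.card_map, Finset.card_map]

lemma bad_not_oddColorable (k : ℕ) (hk : 1 ≤ k) : ¬ OddColorable (badKTree k) (k + 1) := by
  rintro ⟨φ, hprop, hodd⟩
  set q : Fin (k+1) → (Fin k ⊕ Fin (k+1)) :=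
    fun x => if h : x.val < k then Sum.inl ⟨x.val, h⟩ else Sum.inr 0 with hq
  have hq_adj : ∀ x y : Fin (k+1), x ≠ y → (badKTree k).Adj (q x) (q y) := by
    intro x y hne
    have hvy : x.val ≠ y.val := fun h => hne (Fin.ext h)
    simp only [hq]
    by_cases h1 : x.val < k <;> by_cases h2 : y.val < k
    · rw [dif_pos h1, dif_pos h2]
      exact bad_adj_inl_inl (fun heq => hvy (by simpa using congrArg Fin.val heq))
    · rw [dif_pos h1, dif_neg h2]
      exact bad_adj_inl_inr.mpr (Or.inl (by simp))
    · rw [dif_neg h1, dif_pos h2]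
      exact bad_adj_inr_inl.mpr (Or.inl (by simp))
    · exact absurd (by omega : x.val = y.val) hvy
  have hinj : Function.Injective (fun x => φ (q x)) := by
    intro x y h
    by_contra hne
    exact hprop _ _ (hq_adj x y hne) h
  have hsurj : Function.Surjective (fun x => φ (q x)) :=
    ((Fintype.bijective_iff_injective_and_card _).mpr ⟨hinj, by simp⟩).2
  have hB : ∀ j : Fin (k+1), 1 ≤ j.val → ∀ (h : j.val - 1 < k),
      φ (Sum.inr j) = φ (Sum.inl ⟨j.val - 1, h⟩) := by
    intro j hj hlt
    obtain ⟨x, hx⟩ := hsurj (φ (Sum.inr j))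
    simp only at hx
    by_cases h1 : x.val < k
    · have hqx : q x = Sum.inl ⟨x.val, h1⟩ := by rw [hq]; exact dif_pos h1
      rw [hqx] at hx
      by_cases h2 : x.val + 1 = j.val
      · have hxe : (⟨x.val, h1⟩ : Fin k) = ⟨j.val - 1, hlt⟩ := Fin.ext (show x.val = j.val - 1 by omega)
        rw [← hxe, hx]
      · have hadj : (badKTree k).Adj (Sum.inl ⟨x.val, h1⟩) (Sum.inr j) :=
          bad_adj_inl_inr.mpr (Or.inr (show x.val + 1 ≠ j.val from h2))
        exact absurd hx (hprop _ _ hadj)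
    · have hqx : q x = Sum.inr 0 := by rw [hq]; exact dif_neg h1
      rw [hqx] at hx
      have hadj : (badKTree k).Adj (Sum.inr (0 : Fin (k+1))) (Sum.inr j) := by
        rw [bad_adj_inr_inr]
        constructor
        · intro h; rw [← h] at hj; simp at hj
        · left; simp
      exact absurd hx (hprop _ _ hadj)
  have hadj0 : (badKTree k).Adj (Sum.inr (0 : Fin (k+1))) (Sum.inl ⟨0, hk⟩) :=
    bad_adj_inr_inl.mpr (Or.inl (by simp))
  obtain ⟨c, hc⟩ := hodd (Sum.inr 0) ⟨_, hadj0⟩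
  have hAcard : ∀ (c : Fin (k+1)) (B : Finset (Fin (k+1))) (A : Finset (Fin k)),
      (∀ b, b ∈ B ↔ ((badKTree k).Adj (Sum.inr 0) (Sum.inr b) ∧ φ (Sum.inr b) = c)) →
      (∀ a, a ∈ A ↔ ((badKTree k).Adj (Sum.inr 0) (Sum.inl a) ∧ φ (Sum.inl a) = c)) →
      B.card = A.card := by
    intro c B A hmB hmA
    apply Finset.card_bij (fun b _ => (⟨b.val - 1, by have := b.isLt; omega⟩ : Fin k))
    · intro b hb
      rw [hmB] at hb
      rw [hmA]
      simp only [bad_adj_inr_inr, bad_adj_inr_inl] at hb ⊢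
      obtain ⟨⟨hbne, -⟩, hbc⟩ := hb
      have hb1 : 1 ≤ b.val := by
        rcases Nat.eq_zero_or_pos b.val with h | h
        · exact absurd (Fin.ext (by simpa using h.symm) : (0:Fin (k+1)) = b) hbne
        · exact h
      refine ⟨Or.inl (by simp), ?_⟩
      rw [← hB b hb1 (by omega)]
      exact hbc
    · intro b₁ hb₁ b₂ hb₂ heq
      rw [hmB] at hb₁ hb₂
      simp only [bad_adj_inr_inr] at hb₁ hb₂
      have h1 : 1 ≤ b₁.val := by
        rcases Nat.eq_zero_or_pos b₁.val with h | h
        · exact absurd (Fin.ext (by simpa using h.symm) : (0:Fin (k+1)) = b₁) hb₁.1.1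
        · exact h
      have h2 : 1 ≤ b₂.val := by
        rcases Nat.eq_zero_or_pos b₂.val with h | h
        · exact absurd (Fin.ext (by simpa using h.symm) : (0:Fin (k+1)) = b₂) hb₂.1.1
        · exact h
      have hv := congrArg Fin.val heq
      have hv' : b₁.val - 1 = b₂.val - 1 := hv
      exact Fin.ext (by omega)
    · intro a ha
      rw [hmA] at ha
      refine ⟨⟨a.val + 1, by have := a.isLt; omega⟩, ?_, ?_⟩
      · rw [hmB]
        simp only [bad_adj_inr_inr]
        refine ⟨⟨?_, Or.inl (by simp)⟩, ?_⟩
        · intro h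
          have hv := congrArg Fin.val h
          have hv' : (0 : ℕ) = a.val + 1 := by simpa using hv
          omega
        · rw [hB ⟨a.val + 1, by have := a.isLt; omega⟩
            (show 1 ≤ a.val + 1 by omega) (show a.val + 1 - 1 < k by have := a.isLt; omega)]
          have he : (⟨(a.val + 1) - 1, by have := a.isLt; omega⟩ : Fin k) = a :=
            Fin.ext (show a.val + 1 - 1 = a.val by omega)
          rw [he]
          exact ha.2
      · exact Fin.ext (show a.val + 1 - 1 = a.val by omega)
  obtain ⟨A, B, hmA, hmB, hsum⟩ :=
    filter_sum_card (fun u => (badKTree k).Adj (Sum.inr 0) u ∧ φ u = c)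
  have hcc : colorCount (badKTree k) φ (Sum.inr 0) c = A.card + B.card := by
    rw [colorCount, ← hsum]
    exact card_filter_indep _ _ _
  have hBA : B.card = A.card := hAcard c B A hmB hmA
  rw [hcc, hBA] at hc
  rcases hc with ⟨t, ht⟩
  omega

end Aux

/-- For every positive `k` there is a `k`-tree (the concrete graph
`badKTree k`) that is not odd `(k+1)`-colorable. -/
theorem exists_ktree_not_odd_succ_colorable (k : ℕ) (hk : 1 ≤ k) :
    IsKTree k (badKTree k) ∧ ¬ OddColorable (badKTree k) (k + 1) := by
  exact ⟨bad_isKTree k hk, bad_not_oddColorable k hk⟩
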